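/- In the priority evacuation model with 2 servants, let Q, S₁, S₂ be trajectories and B a real with B < 1 + π such that the trajectories evacuate the queen in time B. Then the arc measure of the set of points of the unit circle visited by the queen (at some time) is at least 2(1 + π − B). -/

import Mathlib

open Real Set MeasureTheory
open scoped RealInnerProductSpace

noncomputable section

abbrev Plane : Type := EuclideanSpace ℝ (Fin 2)

/-- The point of the unit circle at angle `θ`. -/
def circlePt (θ : ℝ) : Plane := (WithLp.equiv 2 (Fin 2 → ℝ)).symm ![Real.cos θ, Real.sin θ]

/-- A trajectory in the priority evacuation model: a `1`-Lipschitz function on `[0, ∞)`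
starting at the origin. -/
def IsTraj (f : ℝ → Plane) : Prop :=
  LipschitzOnWith 1 f (Set.Ici 0) ∧ f 0 = 0

/-- The first-visit time of the point `p` by the queen `Q` or one of the servants `S i`. -/
def visitTime {n : ℕ} (Q : ℝ → Plane) (S : Fin n → ℝ → Plane) (p : Plane) : ℝ :=
  sInf {t : ℝ | 0 ≤ t ∧ (Q t = p ∨ ∃ i, S i t = p)}

/-- The trajectories `Q` (queen) and `S 0, …, S (n-1)` (servants) evacuate the queen in
time `B`: every point of the unit circle is visited, and the first-visit time plus the
distance from the queen (at that moment) to the point is at most `B`. -/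
def Evacuates {n : ℕ} (Q : ℝ → Plane) (S : Fin n → ℝ → Plane) (B : ℝ) : Prop :=
  ∀ p : Plane, ‖p‖ = 1 →
    (∃ t : ℝ, 0 ≤ t ∧ (Q t = p ∨ ∃ i, S i t = p)) ∧
    visitTime Q S p + ‖Q (visitTime Q S p) - p‖ ≤ B

/-- The set of angles in `[0, 2π)` whose circle point is visited by the queen at some
time in `Tset`; its Lebesgue measure is the arc measure of the queen-explored set. -/
def queenArc (Q : ℝ → Plane) (Tset : Set ℝ) : Set ℝ :=
  {θ : ℝ | θ ∈ Set.Ico 0 (2 * π) ∧ ∃ s ∈ Tset, Q s = circlePt θ}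

open scoped NNReal ENNReal

lemma norm_circlePt (θ : ℝ) : ‖circlePt θ‖ = 1 := by
  rw [EuclideanSpace.norm_eq]
  simp [circlePt, Fin.sum_univ_two, sq_abs, Real.sin_sq_add_cos_sq]
lemma inner_circlePt (m θ : ℝ) : ⟪circlePt (m + π/2), circlePt θ⟫ = Real.sin (θ - m) := by
  simp [circlePt, PiLp.inner_apply, RCLike.inner_apply, Fin.sum_univ_two,
    Real.cos_add_pi_div_two, Real.sin_add_pi_div_two, Real.sin_sub]
  ring

lemma piece_bound {lam m : ℝ} (hlam0 : 0 < lam) (hlam : lam ≤ π/3) (A : Set ℝ)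
    (hA : ∀ θ ∈ A, |θ - m| ≤ lam) :
    volume A ≤ ENNReal.ofReal (1/Real.cos lam) * μH[(1:ℝ)] (circlePt '' A) := by
  have hpi := Real.pi_pos
  have hlam2 : lam < π/2 := by linarith
  have hcos : 0 < Real.cos lam := Real.cos_pos_of_mem_Ioo ⟨by linarith, hlam2⟩
  set s : ℝ := Real.sin lam with hs
  have hs0 : 0 ≤ s := Real.sin_nonneg_of_nonneg_of_le_pi hlam0.le (by linarith)
  have hs1 : s < 1 := by
    have : s ≤ Real.sin (π/3) :=
      (Real.strictMonoOn_sin.monotoneOn ⟨by linarith, hlam2.le⟩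
        ⟨by linarith, by linarith⟩ hlam)
    have h3 : Real.sin (π/3) = Real.sqrt 3 / 2 := Real.sin_pi_div_three
    have : Real.sqrt 3 < 2 := by
      have : Real.sqrt 3 < Real.sqrt 4 := by
        apply Real.sqrt_lt_sqrt <;> norm_num
      simpa [show Real.sqrt 4 = 2 by
        rw [show (4:ℝ) = 2^2 by norm_num, Real.sqrt_sq]; norm_num] using this
    linarith [Real.strictMonoOn_sin.monotoneOn (a := lam) (b := π/3) ⟨by linarith, hlam2.le⟩
        ⟨by linarith, by linarith⟩ hlam]
  -- the inner-product functional
  set v : Plane := circlePt (m + π/2) with hv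
  have hip : LipschitzWith 1 (fun p : Plane => ⟪v, p⟫) := by
    apply LipschitzWith.of_dist_le_mul
    intro p q
    rw [Real.dist_eq, ← inner_sub_right, NNReal.coe_one, one_mul, dist_eq_norm]
    calc |⟪v, p - q⟫| ≤ ‖v‖ * ‖p - q‖ := abs_real_inner_le_norm v (p - q)
      _ = ‖p - q‖ := by rw [hv, norm_circlePt, one_mul]
  -- arcsin is Lipschitz on [-s, s]
  set C : ℝ≥0 := Real.toNNReal (1/Real.cos lam) with hC
  have harc : LipschitzOnWith C (fun x => m + Real.arcsin x) (Set.Icc (-s) s) := by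
    apply (convex_Icc _ _).lipschitzOnWith_of_nnnorm_hasDerivWithin_le
      (f' := fun x => 1 / Real.sqrt (1 - x^2))
    · intro x hx
      have h1 : x ≠ -1 := by intro h; rw [h] at hx; linarith [hx.1]
      have h2 : x ≠ 1 := by intro h; rw [h] at hx; linarith [hx.2]
      exact ((Real.hasDerivAt_arcsin h1 h2).const_add m).hasDerivWithinAt
    · intro x hx
      have hxs : x^2 ≤ s^2 := sq_le_sq' (by linarith [hx.1]) hx.2
      have hsq : Real.cos lam ≤ Real.sqrt (1 - x^2) := by
        rw [show Real.cos lam = Real.sqrt ((Real.cos lam)^2) by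
          rw [Real.sqrt_sq hcos.le]]
        apply Real.sqrt_le_sqrt
        have : (Real.cos lam)^2 = 1 - s^2 := by
          rw [hs, Real.cos_sq']
        linarith
      have hpos : 0 < Real.sqrt (1 - x^2) := lt_of_lt_of_le hcos hsq
      have hle : 1 / Real.sqrt (1 - x^2) ≤ 1 / Real.cos lam :=
        one_div_le_one_div_of_le hcos hsq
      rw [← NNReal.coe_le_coe, coe_nnnorm, Real.norm_eq_abs,
        abs_of_nonneg (by positivity), hC, Real.coe_toNNReal _ (by positivity)]
      exact hle
  -- the inverse map g on the arc
  set g : Plane → ℝ := (fun x => m + Real.arcsin x) ∘ (fun p : Plane => ⟪v, p⟫) with hg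
  have hmaps : Set.MapsTo (fun p : Plane => ⟪v, p⟫) (circlePt '' A) (Set.Icc (-s) s) := by
    rintro _ ⟨θ, hθ, rfl⟩
    show (⟪v, circlePt θ⟫ : ℝ) ∈ Set.Icc (-s) s
    rw [hv, inner_circlePt]
    have habs := hA θ hθ
    rw [abs_le] at habs
    constructor
    · rw [show -s = Real.sin (-lam) by rw [Real.sin_neg]]
      exact Real.strictMonoOn_sin.monotoneOn ⟨by linarith, by linarith⟩
        ⟨by linarith, by linarith⟩ habs.1
    · exact Real.strictMonoOn_sin.monotoneOn ⟨by linarith, by linarith⟩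
        ⟨by linarith, by linarith⟩ habs.2
  have hglip : LipschitzOnWith (C * 1) g (circlePt '' A) := harc.comp hip.lipschitzOnWith hmaps
  have himg : A ⊆ g '' (circlePt '' A) := by
    intro θ hθ
    refine ⟨circlePt θ, Set.mem_image_of_mem _ hθ, ?_⟩
    rw [hg]
    show m + Real.arcsin (⟪v, circlePt θ⟫ : ℝ) = θ
    rw [hv, inner_circlePt]
    have habs := hA θ hθ
    rw [abs_le] at habs
    rw [Real.arcsin_sin (by linarith) (by linarith)]
    ring
  calc volume A = μH[(1:ℝ)] A := by rw [MeasureTheory.hausdorffMeasure_real]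
    _ ≤ μH[(1:ℝ)] (g '' (circlePt '' A)) := measure_mono himg
    _ ≤ (↑(C * 1))^(1:ℝ) * μH[(1:ℝ)] (circlePt '' A) :=
        hglip.hausdorffMeasure_image_le zero_le_one
    _ = ENNReal.ofReal (1/Real.cos lam) * μH[(1:ℝ)] (circlePt '' A) := by
        rw [mul_one, ENNReal.rpow_one, hC, ENNReal.ofReal]
/-- angle function on the plane, valued in `[0, 2π)` on the circle -/
def angFn (p : Plane) : ℝ :=
  if Complex.arg (Complex.I * (p 1) + (p 0)) < 0 then Complex.arg (Complex.I * (p 1) + (p 0)) + 2*π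
  else Complex.arg (Complex.I * (p 1) + (p 0))

lemma measurable_angFn : Measurable angFn := by
  have h : Measurable fun p : Plane => Complex.arg (Complex.I * (p 1) + (p 0)) := by
    apply Complex.measurable_arg.comp
    fun_prop
  unfold angFn
  exact Measurable.ite (measurableSet_lt h measurable_const) (h.add_const _) h

lemma angFn_circlePt {θ : ℝ} (h0 : 0 ≤ θ) (h2 : θ < 2*π) : angFn (circlePt θ) = θ := by
  have harg : ∀ ψ : ℝ, ψ ∈ Set.Ioc (-π) π →
      Complex.arg (Complex.I * (Real.sin ψ) + (Real.cos ψ)) = ψ := by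
    intro ψ hψ
    rw [show (Complex.I * (Real.sin ψ:ℂ) + (Real.cos ψ:ℂ)) = Complex.cos ψ + Complex.sin ψ * Complex.I by
      rw [← Complex.ofReal_sin, ← Complex.ofReal_cos]; ring]
    exact Complex.arg_cos_add_sin_mul_I hψ
  have hpi := Real.pi_pos
  unfold angFn
  have hc0 : (circlePt θ) 0 = Real.cos θ := rfl
  have hc1 : (circlePt θ) 1 = Real.sin θ := rfl
  rw [hc0, hc1]
  rcases le_or_gt θ π with hle | hgt
  · rw [harg θ ⟨by linarith, hle⟩]
    rw [if_neg (by linarith)]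
  · have : Complex.arg (Complex.I * (Real.sin θ) + (Real.cos θ)) = θ - 2*π := by
      rw [show Real.sin θ = Real.sin (θ - 2*π) by rw [Real.sin_sub_two_pi],
        show Real.cos θ = Real.cos (θ - 2*π) by rw [Real.cos_sub_two_pi]]
      exact harg _ ⟨by linarith, by linarith⟩
    rw [this, if_pos (by linarith)]
    ring

/-- Caratheodory splitting: disjoint measurable hulls give superadditivity. -/
lemma sum_measure_le {X : Type*} [MeasurableSpace X] (μ : Measure X)
    (U E : ℕ → Set X) (hU : ∀ k, MeasurableSet (U k))
    (hd : ∀ j k, j ≠ k → Disjoint (U j) (U k)) (hE : ∀ k, E k ⊆ U k) :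
    ∀ n : ℕ, ∑ k ∈ Finset.range n, μ (E k) ≤ μ (⋃ k ∈ Finset.range n, E k) := by
  intro n
  induction n with
  | zero => simp
  | succ n ih =>
    rw [Finset.sum_range_succ]
    set big := ⋃ k ∈ Finset.range (n+1), E k with hbig
    have key : μ (big ∩ U n) + μ (big \ U n) = μ big := measure_inter_add_diff big (hU n)
    have h1 : E n ⊆ big ∩ U n := by
      intro x hx
      exact ⟨Set.mem_biUnion (Finset.self_mem_range_succ n) hx, hE n hx⟩
    have h2 : (⋃ k ∈ Finset.range n, E k) ⊆ big \ U n := by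
      intro x hx
      simp only [Set.mem_iUnion] at hx
      obtain ⟨k, hk, hxk⟩ := hx
      simp only [Finset.mem_range] at hk
      refine ⟨Set.mem_biUnion (Finset.mem_range.mpr (Nat.lt_succ_of_lt hk)) hxk, ?_⟩
      exact fun hxU => (hd k n (by omega)).ne_of_mem (hE k hxk) hxU rfl
    calc ∑ k ∈ Finset.range n, μ (E k) + μ (E n)
        ≤ μ (big \ U n) + μ (big ∩ U n) :=
          add_le_add (ih.trans (measure_mono h2)) (measure_mono h1)
      _ = μ big := by rw [add_comm]; exact key

lemma arc_le (f : ℝ → Plane) (hf : LipschitzOnWith 1 f (Set.Ici 0)) {B : ℝ} (hB1 : 1 ≤ B) :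
    volume {θ : ℝ | θ ∈ Set.Ico 0 (2*π) ∧ ∃ t ∈ Set.Icc 1 B, f t = circlePt θ} ≤
      ENNReal.ofReal (B - 1) := by
  have hpi := Real.pi_pos
  set A := {θ : ℝ | θ ∈ Set.Ico 0 (2*π) ∧ ∃ t ∈ Set.Icc 1 B, f t = circlePt θ} with hAdef
  have hE : μH[(1:ℝ)] (f '' Set.Icc 1 B) ≤ ENNReal.ofReal (B - 1) := by
    have hlip : LipschitzOnWith 1 f (Set.Icc 1 B) :=
      hf.mono (fun t ht => le_trans zero_le_one ht.1)
    calc μH[(1:ℝ)] (f '' Set.Icc 1 B)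
        ≤ ((1:ℝ≥0):ℝ≥0∞)^(1:ℝ) * μH[(1:ℝ)] (Set.Icc 1 B) :=
          hlip.hausdorffMeasure_image_le zero_le_one
      _ = volume (Set.Icc (1:ℝ) B) := by
          rw [MeasureTheory.hausdorffMeasure_real]; simp
      _ = ENNReal.ofReal (B - 1) := by rw [Real.volume_Icc]
  have key : ∀ n : ℕ, 3 ≤ n → volume A ≤ ENNReal.ofReal ((B-1) / Real.cos (π/n)) := by
    intro n hn
    have hn0 : (0:ℝ) < n := by
      have : (3:ℝ) ≤ n := by exact_mod_cast hn
      linarith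
    set lam := π / n with hlamdef
    have hlam0 : 0 < lam := by positivity
    have hlam3 : lam ≤ π/3 := by
      rw [hlamdef]
      apply div_le_div_of_nonneg_left hpi.le (by norm_num)
      exact_mod_cast hn
    set I : ℕ → Set ℝ := fun k => Set.Ico (2*k*lam) (2*k*lam + 2*lam) with hI
    have hcover : A ⊆ ⋃ k ∈ Finset.range n, A ∩ I k := by
      intro θ hθ
      obtain ⟨⟨h0, h2⟩, -⟩ := id hθ
      have h2lam : 0 < 2*lam := by linarith
      set k := ⌊θ / (2*lam)⌋₊ with hk
      have hkle : (k:ℝ) ≤ θ / (2*lam) := Nat.floor_le (by positivity)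
      have hklt : θ / (2*lam) < k + 1 := Nat.lt_floor_add_one _
      have hn2pi : (n:ℝ) * (2*lam) = 2*π := by
        rw [hlamdef]; field_simp
      have hkn : k < n := by
        have h1 : θ / (2*lam) < n := by
          rw [div_lt_iff₀ h2lam]; linarith
        exact_mod_cast hkle.trans_lt h1
      have hge : (k:ℝ) * (2*lam) ≤ θ := (le_div_iff₀ h2lam).mp hkle
      have hlt : θ < ((k:ℝ)+1) * (2*lam) := (div_lt_iff₀ h2lam).mp hklt
      have hθI : θ ∈ I k := by
        constructor
        · linarith [hge]
        · linarith [hlt]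
      exact Set.mem_biUnion (Finset.mem_range.mpr hkn) ⟨hθ, hθI⟩
    have hmem : ∀ k : ℕ, ∀ θ ∈ A ∩ I k, |θ - (2*k*lam + lam)| ≤ lam := by
      rintro k θ ⟨-, hθ1, hθ2⟩
      rw [abs_le]; constructor <;> [linarith; linarith]
    have hU : ∀ k : ℕ, MeasurableSet (angFn ⁻¹' (I k)) :=
      fun k => measurable_angFn measurableSet_Ico
    have hdisj : ∀ j k : ℕ, j ≠ k → Disjoint (angFn ⁻¹' (I j)) (angFn ⁻¹' (I k)) := by
      intro j k hjk
      apply Disjoint.preimage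
      rw [hI, Set.Ico_disjoint_Ico]
      rcases hjk.lt_or_gt with h | h
      · have h1 : (j:ℝ) + 1 ≤ k := by exact_mod_cast h
        calc min (2*(j:ℝ)*lam + 2*lam) (2*(k:ℝ)*lam + 2*lam) ≤ 2*(j:ℝ)*lam + 2*lam :=
              min_le_left _ _
          _ ≤ 2*(k:ℝ)*lam := by nlinarith
          _ ≤ max (2*(j:ℝ)*lam) (2*(k:ℝ)*lam) := le_max_right _ _
      · have h1 : (k:ℝ) + 1 ≤ j := by exact_mod_cast h
        calc min (2*(j:ℝ)*lam + 2*lam) (2*(k:ℝ)*lam + 2*lam) ≤ 2*(k:ℝ)*lam + 2*lam :=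
              min_le_right _ _
          _ ≤ 2*(j:ℝ)*lam := by nlinarith
          _ ≤ max (2*(j:ℝ)*lam) (2*(k:ℝ)*lam) := le_max_left _ _
    have hEsub : ∀ k : ℕ, circlePt '' (A ∩ I k) ⊆ angFn ⁻¹' (I k) := by
      rintro k _ ⟨θ, ⟨hθA, hθI⟩, rfl⟩
      rw [Set.mem_preimage, angFn_circlePt hθA.1.1 hθA.1.2]
      exact hθI
    have hUnion : (⋃ k ∈ Finset.range n, circlePt '' (A ∩ I k)) ⊆ f '' Set.Icc 1 B := by
      intro x hx
      simp only [Set.mem_iUnion] at hx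
      obtain ⟨k, -, θ, ⟨hθA, -⟩, rfl⟩ := hx
      obtain ⟨t, ht, hft⟩ := hθA.2
      exact ⟨t, ht, hft⟩
    have hcosl : 0 < Real.cos lam := Real.cos_pos_of_mem_Ioo ⟨by linarith, by linarith⟩
    calc volume A ≤ volume (⋃ k ∈ Finset.range n, A ∩ I k) := measure_mono hcover
      _ ≤ ∑ k ∈ Finset.range n, volume (A ∩ I k) := measure_biUnion_finset_le _ _
      _ ≤ ∑ k ∈ Finset.range n,
            ENNReal.ofReal (1/Real.cos lam) * μH[(1:ℝ)] (circlePt '' (A ∩ I k)) :=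
          Finset.sum_le_sum (fun k _ => piece_bound hlam0 hlam3 _ (hmem k))
      _ = ENNReal.ofReal (1/Real.cos lam) *
            ∑ k ∈ Finset.range n, μH[(1:ℝ)] (circlePt '' (A ∩ I k)) := by
          rw [Finset.mul_sum]
      _ ≤ ENNReal.ofReal (1/Real.cos lam) *
            μH[(1:ℝ)] (⋃ k ∈ Finset.range n, circlePt '' (A ∩ I k)) :=
          mul_le_mul_right
            (sum_measure_le μH[(1:ℝ)] (fun k => angFn ⁻¹' (I k))
              (fun k => circlePt '' (A ∩ I k)) hU hdisj hEsub n) _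
      _ ≤ ENNReal.ofReal (1/Real.cos lam) * μH[(1:ℝ)] (f '' Set.Icc 1 B) :=
          mul_le_mul_right (measure_mono hUnion) _
      _ ≤ ENNReal.ofReal (1/Real.cos lam) * ENNReal.ofReal (B-1) := mul_le_mul_right hE _
      _ = ENNReal.ofReal ((B-1)/Real.cos lam) := by
          rw [← ENNReal.ofReal_mul (by positivity)]
          ring_nf
  have hlim : Filter.Tendsto (fun n : ℕ => ENNReal.ofReal ((B-1)/Real.cos (π/n)))
      Filter.atTop (nhds (ENNReal.ofReal (B-1))) := by
    apply ENNReal.tendsto_ofReal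
    have h1 : Filter.Tendsto (fun n : ℕ => π/(n:ℝ)) Filter.atTop (nhds 0) :=
      tendsto_const_div_atTop_nhds_zero_nat π
    have h2 : Filter.Tendsto (fun n : ℕ => Real.cos (π/(n:ℝ))) Filter.atTop (nhds 1) := by
      have := (Real.continuous_cos.tendsto 0).comp h1
      simpa [Function.comp_def] using this
    have h3 := Filter.Tendsto.div (tendsto_const_nhds (x := B-1) (f := Filter.atTop (α := ℕ))) h2 one_ne_zero
    simpa [Pi.div_def] using h3
  exact ge_of_tendsto hlim (Filter.eventually_atTop.mpr ⟨3, key⟩)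

/-- with two servants any evacuation in time `B < 1 + π` forces the queen
to explore a subset of the perimeter of arc measure at least `2 (1 + π - B)`. -/
theorem queen_must_explore_two_servants
    (Q : ℝ → Plane) (S : Fin 2 → ℝ → Plane)
    (hQ : IsTraj Q) (hS : ∀ i, IsTraj (S i))
    (B : ℝ) (hB : B < 1 + π) (hEv : Evacuates Q S B) :
    ENNReal.ofReal (2 * (1 + π - B)) ≤ volume (queenArc Q (Set.Ici 0)) := by
  have hpi := Real.pi_pos
  have hvt_nonneg : ∀ p : Plane, 0 ≤ visitTime Q S p := by
    intro p
    apply Real.sInf_nonneg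
    rintro x ⟨hx, -⟩; exact hx
  have hnormf : ∀ f : ℝ → Plane, IsTraj f → ∀ t : ℝ, 0 ≤ t → ‖f t‖ ≤ t := by
    intro f hf t ht
    have hd := (lipschitzOnWith_iff_dist_le_mul.mp hf.1) t ht 0 (Set.mem_Ici.mpr le_rfl)
    rw [hf.2, dist_zero_right, Real.dist_0_eq_abs, abs_of_nonneg ht,
      NNReal.coe_one, one_mul] at hd
    exact hd
  have hB1 : 1 ≤ B := by
    obtain ⟨hne0, hreach0⟩ := hEv (circlePt 0) (norm_circlePt 0)
    set tp := visitTime Q S (circlePt 0) with htp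
    have h1 : ‖circlePt 0‖ - ‖Q tp‖ ≤ ‖Q tp - circlePt 0‖ := by
      rw [norm_sub_rev]; exact norm_sub_norm_le _ _
    have h2 : ‖Q tp‖ ≤ tp := hnormf Q hQ tp (hvt_nonneg _)
    rw [norm_circlePt] at h1
    linarith [hreach0]
  set A : Fin 2 → Set ℝ :=
    fun i => {θ : ℝ | θ ∈ Set.Ico 0 (2*π) ∧ ∃ t ∈ Set.Icc 1 B, S i t = circlePt θ} with hA
  have hcover : Set.Ico 0 (2*π) ⊆ queenArc Q (Set.Ici 0) ∪ (A 0 ∪ A 1) := by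
    intro θ hθ
    have hnorm := norm_circlePt θ
    obtain ⟨hne, hre⟩ := hEv (circlePt θ) hnorm
    set p := circlePt θ with hp
    set V : Set ℝ := {t : ℝ | 0 ≤ t ∧ (Q t = p ∨ ∃ i, S i t = p)} with hV
    have hVclosed : IsClosed V := by
      have hc : ∀ f : ℝ → Plane, IsTraj f → IsClosed (Set.Ici 0 ∩ f ⁻¹' {p}) := fun f hf =>
        hf.1.continuousOn.preimage_isClosed_of_isClosed isClosed_Ici isClosed_singleton
      have hVeq : V = (Set.Ici 0 ∩ Q ⁻¹' {p}) ∪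
          ((Set.Ici 0 ∩ (S 0) ⁻¹' {p}) ∪ (Set.Ici 0 ∩ (S 1) ⁻¹' {p})) := by
        ext t
        simp only [hV, Set.mem_setOf_eq, Set.mem_union, Set.mem_inter_iff, Set.mem_preimage,
          Set.mem_singleton_iff, Set.mem_Ici, Fin.exists_fin_two]
        tauto
      rw [hVeq]
      exact (hc Q hQ).union ((hc (S 0) (hS 0)).union (hc (S 1) (hS 1)))
    have hmemV : visitTime Q S p ∈ V := by
      have hbdd : BddBelow V := ⟨0, fun x hx => hx.1⟩
      exact hVclosed.csInf_mem hne hbdd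
    set tp := visitTime Q S p with htp
    obtain ⟨htp0, hvisit⟩ := hmemV
    rcases hvisit with hq | ⟨i, hi⟩
    · exact Or.inl ⟨hθ, tp, htp0, hq⟩
    · have h1tp : 1 ≤ tp := by
        have hn : ‖S i tp‖ ≤ tp := hnormf (S i) (hS i) tp htp0
        rw [hi, hp, norm_circlePt] at hn
        exact hn
      have htpB : tp ≤ B := by
        have hn : 0 ≤ ‖Q tp - p‖ := norm_nonneg _
        linarith [hre]
      right
      fin_cases i
      · exact Or.inl ⟨hθ, tp, ⟨h1tp, htpB⟩, hi⟩
      · exact Or.inr ⟨hθ, tp, ⟨h1tp, htpB⟩, hi⟩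
  have harc0 : volume (A 0) ≤ ENNReal.ofReal (B - 1) := arc_le (S 0) (hS 0).1 hB1
  have harc1 : volume (A 1) ≤ ENNReal.ofReal (B - 1) := arc_le (S 1) (hS 1).1 hB1
  have hkey : ENNReal.ofReal (2*π) ≤
      volume (queenArc Q (Set.Ici 0)) + ENNReal.ofReal (2*B - 2) := by
    calc ENNReal.ofReal (2*π) = volume (Set.Ico (0:ℝ) (2*π)) := by
          rw [Real.volume_Ico, sub_zero]
      _ ≤ volume (queenArc Q (Set.Ici 0) ∪ (A 0 ∪ A 1)) := measure_mono hcover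
      _ ≤ volume (queenArc Q (Set.Ici 0)) + (volume (A 0) + volume (A 1)) :=
          le_trans (measure_union_le _ _) (add_le_add_right (measure_union_le _ _) _)
      _ ≤ volume (queenArc Q (Set.Ici 0)) + (ENNReal.ofReal (B-1) + ENNReal.ofReal (B-1)) :=
          add_le_add_right (add_le_add harc0 harc1) _
      _ = volume (queenArc Q (Set.Ici 0)) + ENNReal.ofReal (2*B - 2) := by
          rw [← ENNReal.ofReal_add (by linarith) (by linarith)]
          ring_nf
  rw [show 2*(1+π-B) = 2*π - (2*B-2) by ring,
    ENNReal.ofReal_sub _ (by linarith : (0:ℝ) ≤ 2*B-2)]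
  exact tsub_le_iff_right.mpr hkey
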